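/- Let (E_i)_{i∈I} be a finite family of d×d complex matrices with Σ_{i∈I} E_iᴴ E_i ≼ I in the Löwner order (i.e., the super-operator E(ρ) = Σ_i E_i ρ E_iᴴ is trace-non-increasing). Then every complex eigenvalue λ of the d²×d² matrix M = Σ_{i∈I} E_i ⊗ conj(E_i) (Kronecker product, with conj denoting entrywise complex conjugation) satisfies |λ| ≤ 1. -/

import Mathlib

open Matrix Kronecker ComplexOrder

private lemma mulVec_sum' {m n α : Type*} [Fintype n] [NonUnitalNonAssocSemiring α]
    {ι : Type*} (s : Finset ι) (A : ι → Matrix m n α) (v : n → α) :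
    (∑ i ∈ s, A i) *ᵥ v = ∑ i ∈ s, A i *ᵥ v := by
  ext j
  simp only [Matrix.mulVec, dotProduct, Matrix.sum_apply, Finset.sum_mul,
    Finset.sum_apply]
  rw [Finset.sum_comm]

private lemma dotProduct_sum' {n α : Type*} [Fintype n] [NonUnitalNonAssocSemiring α]
    {ι : Type*} (s : Finset ι) (v : n → α) (w : ι → n → α) :
    v ⬝ᵥ (∑ i ∈ s, w i) = ∑ i ∈ s, v ⬝ᵥ w i := by
  simp only [dotProduct, Finset.sum_apply, Finset.mul_sum]
  rw [Finset.sum_comm]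

private lemma quad_conj {d : ℕ} (A Z : Matrix (Fin d) (Fin d) ℂ) (u : Fin d → ℂ) :
    star u ⬝ᵥ (Aᴴ * Z * A) *ᵥ u = star (A *ᵥ u) ⬝ᵥ Z *ᵥ (A *ᵥ u) := by
  rw [mul_assoc, ← Matrix.mulVec_mulVec, dotProduct_mulVec (star u) Aᴴ,
    ← Matrix.star_mulVec, Matrix.mulVec_mulVec]

private lemma quad_self {d : ℕ} (A : Matrix (Fin d) (Fin d) ℂ) (u : Fin d → ℂ) :
    star (A *ᵥ u) ⬝ᵥ (A *ᵥ u) = star u ⬝ᵥ (Aᴴ * A) *ᵥ u := by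
  rw [← Matrix.mulVec_mulVec, dotProduct_mulVec (star u) Aᴴ, ← Matrix.star_mulVec]

/-- the energy `re (star u ⬝ᵥ u)` equals the sum of squared absolute values -/
private lemma re_star_dot {d : ℕ} (u : Fin d → ℂ) :
    (star u ⬝ᵥ u).re = ∑ i, ‖u i‖ ^ 2 := by
  simp only [dotProduct, Pi.star_apply, Complex.re_sum, Complex.sq_norm]
  refine Finset.sum_congr rfl fun i _ => ?_
  rw [Complex.star_def, ← Complex.normSq_eq_conj_mul_self]
  simp

private lemma exists_quad_ne_zero {d : ℕ} {Y : Matrix (Fin d) (Fin d) ℂ} (hY : Y ≠ 0) :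
    ∃ x : Fin d → ℂ, star x ⬝ᵥ Y *ᵥ x ≠ 0 := by
  by_contra h
  push_neg at h
  apply hY
  have hT : Matrix.toEuclideanLin Y = 0 := by
    rw [← inner_map_self_eq_zero]
    intro x
    have hx := h ((WithLp.equiv 2 (Fin d → ℂ)) x)
    have : (inner ℂ (Matrix.toEuclideanLin Y x) x : ℂ)
        = starRingEnd ℂ (star ((WithLp.equiv 2 (Fin d → ℂ)) x) ⬝ᵥ
            Y *ᵥ ((WithLp.equiv 2 (Fin d → ℂ)) x)) := by
      simp only [Matrix.toEuclideanLin_apply, PiLp.inner_apply, dotProduct,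
        Pi.star_apply, RCLike.inner_apply, map_sum, _root_.map_mul, Complex.star_def,
        Complex.conj_conj]
      exact Finset.sum_congr rfl fun i _ => rfl
    rw [this, hx, map_zero]
  have := congrArg (Matrix.toEuclideanLin (𝕜 := ℂ)).symm hT
  simpa using this

/-- correspondence between `Mᴴ` acting on vectors and the adjoint channel on matrices -/
private lemma kraus_corr {d : ℕ} {I : Type} [Fintype I] (E : I → Matrix (Fin d) (Fin d) ℂ)
    (v : Fin d × Fin d → ℂ) (a b : Fin d) :
    ((∑ i, (E i) ⊗ₖ ((E i).map (starRingEnd ℂ)))ᴴ *ᵥ v) (a, b)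
      = (∑ i, (E i)ᴴ * (Matrix.of fun c e => v (c, e)) * E i) a b := by
  simp only [Matrix.mulVec, dotProduct, Matrix.conjTranspose_apply,
    Matrix.sum_apply, Matrix.kroneckerMap_apply, Matrix.map_apply, Matrix.mul_apply,
    Fintype.sum_prod_type, Matrix.of_apply, star_sum, star_mul', RingHom.coe_coe,
    Complex.star_def, Complex.conj_conj, Finset.sum_mul, Finset.mul_sum]
  have h1 : ∀ (f : Fin d → Fin d → I → ℂ),
      ∑ x, ∑ x1, ∑ x2, f x x1 x2 = ∑ x2, ∑ x, ∑ x1, f x x1 x2 := by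
    intro f
    calc ∑ x, ∑ x1, ∑ x2, f x x1 x2
        = ∑ x, ∑ x2, ∑ x1, f x x1 x2 := Finset.sum_congr rfl (fun x _ => Finset.sum_comm)
      _ = ∑ x2, ∑ x, ∑ x1, f x x1 x2 := Finset.sum_comm
  rw [h1]
  refine Finset.sum_congr rfl fun i _ => ?_
  conv_rhs => rw [Finset.sum_comm]
  refine Finset.sum_congr rfl fun c _ => Finset.sum_congr rfl fun e _ => ?_
  ring

/-- the contraction step : quadratic-form bounds are preserved by the adjoint channel -/
private lemma quad_step {d : ℕ} {I : Type} [Fintype I] (E : I → Matrix (Fin d) (Fin d) ℂ)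
    (htni : ((1 : Matrix (Fin d) (Fin d) ℂ) - ∑ i, (E i)ᴴ * E i).PosSemidef)
    (Z : Matrix (Fin d) (Fin d) ℂ) (c : ℝ) (hc : 0 ≤ c)
    (hZ : ∀ u, ‖star u ⬝ᵥ Z *ᵥ u‖ ≤ c * (star u ⬝ᵥ u).re) :
    ∀ u, ‖star u ⬝ᵥ (∑ i, (E i)ᴴ * Z * E i) *ᵥ u‖ ≤ c * (star u ⬝ᵥ u).re := by
  intro u
  have hexp : star u ⬝ᵥ (∑ i, (E i)ᴴ * Z * E i) *ᵥ u
      = ∑ i, star (E i *ᵥ u) ⬝ᵥ Z *ᵥ (E i *ᵥ u) := by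
    rw [mulVec_sum', dotProduct_sum']
    exact Finset.sum_congr rfl fun i _ => quad_conj (E i) Z u
  have hsum : ∑ i, (star (E i *ᵥ u) ⬝ᵥ (E i *ᵥ u)).re ≤ (star u ⬝ᵥ u).re := by
    have h0 := htni.re_dotProduct_nonneg u
    simp only [RCLike.re_to_complex] at h0
    rw [Matrix.sub_mulVec, dotProduct_sub, Matrix.one_mulVec, Complex.sub_re] at h0
    have heq : (star u ⬝ᵥ (∑ i, (E i)ᴴ * E i) *ᵥ u).re
        = ∑ i, (star (E i *ᵥ u) ⬝ᵥ (E i *ᵥ u)).re := by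
      rw [mulVec_sum', dotProduct_sum', Complex.re_sum]
      exact Finset.sum_congr rfl fun i _ => by rw [quad_self]
    linarith
  calc ‖star u ⬝ᵥ (∑ i, (E i)ᴴ * Z * E i) *ᵥ u‖
      = ‖∑ i, star (E i *ᵥ u) ⬝ᵥ Z *ᵥ (E i *ᵥ u)‖ := by rw [hexp]
    _ ≤ ∑ i, ‖star (E i *ᵥ u) ⬝ᵥ Z *ᵥ (E i *ᵥ u)‖ := norm_sum_le _ _
    _ ≤ ∑ i, c * (star (E i *ᵥ u) ⬝ᵥ (E i *ᵥ u)).re :=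
        Finset.sum_le_sum fun i _ => hZ (E i *ᵥ u)
    _ = c * ∑ i, (star (E i *ᵥ u) ⬝ᵥ (E i *ᵥ u)).re := by rw [Finset.mul_sum]
    _ ≤ c * (star u ⬝ᵥ u).re := mul_le_mul_of_nonneg_left hsum hc

/-- the crude quadratic-form bound with `C = ∑ |Y a b|` -/
private lemma quad_bound {d : ℕ} (Y : Matrix (Fin d) (Fin d) ℂ) (u : Fin d → ℂ) :
    ‖star u ⬝ᵥ Y *ᵥ u‖ ≤ (∑ a, ∑ b, ‖Y a b‖) * (star u ⬝ᵥ u).re := by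
  have hs : ∀ i, ‖u i‖ ^ 2 ≤ (star u ⬝ᵥ u).re := by
    intro i
    rw [re_star_dot]
    exact Finset.single_le_sum (f := fun j => ‖u j‖ ^ 2) (fun j _ => sq_nonneg _) (Finset.mem_univ i)
  have hprod : ∀ a b, ‖u a‖ * ‖u b‖ ≤ (star u ⬝ᵥ u).re := by
    intro a b
    nlinarith [hs a, hs b, norm_nonneg (u a), norm_nonneg (u b),
      sq_nonneg (‖u a‖ - ‖u b‖)]
  have hexp : star u ⬝ᵥ Y *ᵥ u = ∑ a, ∑ b, starRingEnd ℂ (u a) * (Y a b * u b) := by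
    simp [dotProduct, Matrix.mulVec, Finset.mul_sum, Complex.star_def]
  have step1 : ‖star u ⬝ᵥ Y *ᵥ u‖
      ≤ ∑ a, ∑ b, ‖Y a b‖ * (star u ⬝ᵥ u).re := by
    rw [hexp]
    refine le_trans (norm_sum_le _ _) (Finset.sum_le_sum fun a _ => ?_)
    refine le_trans (norm_sum_le _ _) (Finset.sum_le_sum fun b _ => ?_)
    rw [norm_mul, norm_mul, Complex.norm_conj]
    calc ‖u a‖ * (‖Y a b‖ * ‖u b‖)
        = ‖Y a b‖ * (‖u a‖ * ‖u b‖) := by ring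
      _ ≤ ‖Y a b‖ * (star u ⬝ᵥ u).re :=
          mul_le_mul_of_nonneg_left (hprod a b) (norm_nonneg _)
  have heq : (∑ a, ∑ b, ‖Y a b‖) * (star u ⬝ᵥ u).re
      = ∑ a, ∑ b, ‖Y a b‖ * (star u ⬝ᵥ u).re := by
    simp [Finset.sum_mul]
  rw [heq]
  exact step1

theorem eigenvalue_matrixRep_le_one {d : ℕ} {I : Type} [Fintype I]
    (E : I → Matrix (Fin d) (Fin d) ℂ)
    (htni : ((1 : Matrix (Fin d) (Fin d) ℂ) - ∑ i, (E i)ᴴ * E i).PosSemidef)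
    (M : Matrix (Fin d × Fin d) (Fin d × Fin d) ℂ)
    (hM : M = ∑ i, (E i) ⊗ₖ ((E i).map (starRingEnd ℂ)))
    (lam : ℂ) (hlam : lam ∈ spectrum ℂ M) :
    ‖lam‖ ≤ 1 := by
  classical
  -- Step 1: det (lam • 1 - M) = 0
  have hdet : (lam • (1 : Matrix (Fin d × Fin d) (Fin d × Fin d) ℂ) - M).det = 0 := by
    have h1 := spectrum.mem_iff.mp hlam
    rw [Algebra.algebraMap_eq_smul_one] at h1
    by_contra hne
    exact h1 ((Matrix.isUnit_iff_isUnit_det _).mpr (isUnit_iff_ne_zero.mpr hne))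
  -- Step 2: det (conj lam • 1 - Mᴴ) = 0
  set μ := starRingEnd ℂ lam with hμ
  have hdetH : (μ • (1 : Matrix (Fin d × Fin d) (Fin d × Fin d) ℂ) - Mᴴ).det = 0 := by
    have : (μ • (1 : Matrix (Fin d × Fin d) (Fin d × Fin d) ℂ) - Mᴴ)
        = (lam • (1 : Matrix (Fin d × Fin d) (Fin d × Fin d) ℂ) - M)ᴴ := by
      rw [Matrix.conjTranspose_sub, Matrix.conjTranspose_smul, Matrix.conjTranspose_one]
      rfl
    rw [this, Matrix.det_conjTranspose, hdet, star_zero]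
  -- Step 3: eigenvector of Mᴴ
  obtain ⟨v, hv0, hvec⟩ := (Matrix.exists_mulVec_eq_zero_iff).mpr hdetH
  have hvec' : Mᴴ *ᵥ v = μ • v := by
    rw [Matrix.sub_mulVec, sub_eq_zero] at hvec
    rw [← hvec, Matrix.smul_mulVec, Matrix.one_mulVec]
  -- the eigen-matrix Y
  set Y : Matrix (Fin d) (Fin d) ℂ := Matrix.of fun a b => v (a, b) with hY
  have hYne : Y ≠ 0 := by
    intro h
    apply hv0
    funext p
    have := congrFun (congrFun h p.1) p.2
    simpa [hY] using this
  -- the adjoint channel Φ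
  set Φ : Matrix (Fin d) (Fin d) ℂ → Matrix (Fin d) (Fin d) ℂ :=
    fun Z => ∑ i, (E i)ᴴ * Z * E i with hΦ
  have hPhiY : Φ Y = μ • Y := by
    ext a b
    have h1 := kraus_corr E v a b
    rw [← hM] at h1
    have h2 : (Mᴴ *ᵥ v) (a, b) = μ * v (a, b) := by rw [hvec']; rfl
    simp only [hΦ, hY]
    rw [← h1, h2]
    rfl
  have hPhi_smul : ∀ (c : ℂ) (Z : Matrix (Fin d) (Fin d) ℂ), Φ (c • Z) = c • Φ Z := by
    intro c Z
    simp only [hΦ, Finset.smul_sum, Matrix.mul_smul, Matrix.smul_mul]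
  -- iterates
  have hiter : ∀ n : ℕ, Φ^[n] Y = μ ^ n • Y := by
    intro n
    induction n with
    | zero => simp
    | succ n ih =>
      rw [Function.iterate_succ_apply', ih, hPhi_smul, hPhiY, smul_smul, ← pow_succ]
  -- the uniform quadratic bound
  set C : ℝ := ∑ a, ∑ b, ‖Y a b‖ with hC
  have hCnn : 0 ≤ C := Finset.sum_nonneg fun a _ => Finset.sum_nonneg fun b _ =>
    norm_nonneg _
  have hbound : ∀ n u, ‖star u ⬝ᵥ (Φ^[n] Y) *ᵥ u‖ ≤ C * (star u ⬝ᵥ u).re := by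
    intro n
    induction n with
    | zero => exact fun u => quad_bound Y u
    | succ n ih =>
      rw [Function.iterate_succ_apply']
      exact quad_step E htni _ C hCnn ih
  -- choose a witness x₀
  obtain ⟨x₀, hx₀⟩ := exists_quad_ne_zero hYne
  have hq : 0 < ‖star x₀ ⬝ᵥ Y *ᵥ x₀‖ := norm_pos_iff.mpr hx₀
  have hkey : ∀ n : ℕ, ‖lam‖ ^ n * ‖star x₀ ⬝ᵥ Y *ᵥ x₀‖
      ≤ C * (star x₀ ⬝ᵥ x₀).re := by
    intro n
    have h1 := hbound n x₀
    rw [hiter n] at h1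
    have h2 : star x₀ ⬝ᵥ (μ ^ n • Y) *ᵥ x₀ = μ ^ n * (star x₀ ⬝ᵥ Y *ᵥ x₀) := by
      rw [Matrix.smul_mulVec, dotProduct_smul]
      rfl
    rw [h2, hμ] at h1
    rw [norm_mul, norm_pow, Complex.norm_conj] at h1
    exact h1
  -- conclude
  by_contra habs
  push_neg at habs
  obtain ⟨n, hn⟩ := pow_unbounded_of_one_lt
    (C * (star x₀ ⬝ᵥ x₀).re / ‖star x₀ ⬝ᵥ Y *ᵥ x₀‖) habs
  have := hkey n
  rw [div_lt_iff₀ hq] at hn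
  linarith
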